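/- Conversely, let (Ω, 𝓔, p) be a fragment where span(Ω) and span(𝓔) carry the bilinear map p, and suppose there exist injective linear maps σ on span(Ω) and τ on span(𝓔) and a tomographic bilinear map q with q(σ(s), τ(e)) = p(s, e) for all s ∈ Ω, e ∈ 𝓔. Then p itself is tomographic: distinct elements of span(Ω) are separated by 𝓔, and distinct elements of span(𝓔) are separated by Ω. -/
import Mathlib


/-- Conversely: if a fragment admits a faithful (injective) shadow map onto a
tomographic GPT, then the fragment itself is tomographic. -/
theorem stmt6
    {S E U V : Type*}
    [AddCommGroup S] [Module ℝ S] [FiniteDimensional ℝ S]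
    [AddCommGroup E] [Module ℝ E] [FiniteDimensional ℝ E]
    [AddCommGroup U] [Module ℝ U] [FiniteDimensional ℝ U]
    [AddCommGroup V] [Module ℝ V] [FiniteDimensional ℝ V]
    (Ω : Set S) (𝓔 : Set E)
    (hΩspan : Submodule.span ℝ Ω = ⊤) (h𝓔span : Submodule.span ℝ 𝓔 = ⊤)
    (p : S →ₗ[ℝ] E →ₗ[ℝ] ℝ)
    (σ : S →ₗ[ℝ] U) (τ : E →ₗ[ℝ] V) (q : U →ₗ[ℝ] V →ₗ[ℝ] ℝ)
    (hσ : Function.Injective σ) (hτ : Function.Injective τ)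
    (hq : ∀ s ∈ Ω, ∀ e ∈ 𝓔, q (σ s) (τ e) = p s e)
    (hqtomoL : ∀ u ∈ LinearMap.range σ, (∀ v ∈ LinearMap.range τ, q u v = 0) → u = 0)
    (hqtomoR : ∀ v ∈ LinearMap.range τ, (∀ u ∈ LinearMap.range σ, q u v = 0) → v = 0) :
    (∀ s s' : S, (∀ e ∈ 𝓔, p s e = p s' e) → s = s') ∧
    (∀ e e' : E, (∀ s ∈ Ω, p s e = p s e') → e = e') := by
  -- q agrees with p everywhere
  have key : ∀ s e, q (σ s) (τ e) = p s e := by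
    intro s e
    have hs : s ∈ Submodule.span ℝ Ω := hΩspan ▸ Submodule.mem_top
    have he : e ∈ Submodule.span ℝ 𝓔 := h𝓔span ▸ Submodule.mem_top
    induction hs using Submodule.span_induction with
    | mem x hx =>
      induction he using Submodule.span_induction with
      | mem y hy => exact hq x hx y hy
      | zero => simp
      | add a b _ _ ha hb => simp [ha, hb]
      | smul c a _ ha => simp [ha]
    | zero => simp
    | add a b _ _ ha hb => simp [ha, hb]
    | smul c a _ ha => simp [ha]
  constructor
  · intro s s' h
    have h' : ∀ e, p s e = p s' e := by
      intro e
      have he : e ∈ Submodule.span ℝ 𝓔 := h𝓔span ▸ Submodule.mem_top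
      induction he using Submodule.span_induction with
      | mem y hy => exact h y hy
      | zero => simp
      | add a b _ _ ha hb => simp [ha, hb]
      | smul c a _ ha => simp [ha]
    have : σ (s - s') = 0 := by
      apply hqtomoL _ ⟨s - s', rfl⟩
      rintro v ⟨e, rfl⟩
      simp [key, h']
    have := hσ (by simpa using this : σ (s - s') = σ 0)
    exact sub_eq_zero.mp this
  · intro e e' h
    have h' : ∀ s, p s e = p s e' := by
      intro s
      have hs : s ∈ Submodule.span ℝ Ω := hΩspan ▸ Submodule.mem_top
      induction hs using Submodule.span_induction with
      | mem y hy => exact h y hy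
      | zero => simp
      | add a b _ _ ha hb => simp [ha, hb]
      | smul c a _ ha => simp [ha]
    have : τ (e - e') = 0 := by
      apply hqtomoR _ ⟨e - e', rfl⟩
      rintro u ⟨s, rfl⟩
      simp [key, h']
    have := hτ (by simpa using this : τ (e - e') = τ 0)
    exact sub_eq_zero.mp this
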